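/- Fix L ∈ ℕ and K ≥ 2. Let f = g_{KL} be the (K·L)-fold composition of the tent map g(x)=min{2x,2-2x}, which is computable by a ReLU network with L·K hidden layers of width 2 (hence O(K·L) neurons). If f is also exactly representable by a ReLU network with L̃ ≤ L hidden layers and at most n neurons per layer, then the total number of neurons of that network is at least c·L̃·K^{L/L̃} for an absolute constant c > 0. -/

import Mathlib

/-- The tent (hat) function `g(x) = min (2x) (2 - 2x)`. -/
noncomputable def tent : ℝ → ℝ := fun x => min (2 * x) (2 - 2 * x)

/-- Hidden layer activations of a deep ReLU network with scalar input. -/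
noncomputable def reluHidden (w : ℕ → ℕ) (c : Fin (w 0) → ℝ)
    (A : ∀ ℓ, Fin (w (ℓ + 1)) → Fin (w ℓ) → ℝ) (b : ∀ ℓ, Fin (w ℓ) → ℝ) :
    (ℓ : ℕ) → ℝ → Fin (w ℓ) → ℝ
  | 0 => fun x i => max (c i * x + b 0 i) 0
  | (ℓ + 1) => fun x i =>
      max ((∑ j, A ℓ i j * reluHidden w c A b ℓ x j) + b (ℓ + 1) i) 0


/-- `f` agrees with an affine function on `I`. -/
def AffOn (f : ℝ → ℝ) (I : Set ℝ) : Prop := ∃ m q : ℝ, ∀ x ∈ I, f x = m * x + q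

/-- `f` is affine on every open interval disjoint from the finite set `s`. -/
def PW (s : Finset ℝ) (f : ℝ → ℝ) : Prop :=
  ∀ a b : ℝ, (∀ z ∈ s, z ∉ Set.Ioo a b) → AffOn f (Set.Ioo a b)

lemma PW.mono {s t : Finset ℝ} {f : ℝ → ℝ} (h : PW s f) (hst : s ⊆ t) : PW t f :=
  fun a b hd => h a b (fun z hz => hd z (hst hz))

lemma PW.affineCombo {N : ℕ} {s : Finset ℝ} {H : Fin N → ℝ → ℝ} (v : Fin N → ℝ) (v0 : ℝ)
    (h : ∀ j, PW s (H j)) : PW s (fun x => (∑ j, v j * H j x) + v0) := by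
  intro a b hd
  choose m q hmq using fun j => h j a b hd
  refine ⟨∑ j, v j * m j, (∑ j, v j * q j) + v0, fun x hx => ?_⟩
  have h1 : ∀ j ∈ Finset.univ, v j * H j x = v j * m j * x + v j * q j := fun j _ => by
    rw [hmq j x hx]; ring
  show (∑ j, v j * H j x) + v0 = _
  rw [Finset.sum_congr rfl h1, Finset.sum_add_distrib, Finset.sum_mul]
  ring

lemma pw_relu {s : Finset ℝ} {f : ℝ → ℝ} (hf : PW s f) :
    ∃ e : Finset ℝ, e.card ≤ s.card + 1 ∧ PW (s ∪ e) (fun x => max (f x) 0) := by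
  classical
  set Z : Set ℝ := {x | f x = 0} with hZdef
  refine ⟨insert (sInf Z) (s.image fun z => sInf (Z ∩ Set.Ioi z)), ?_, ?_⟩
  · calc (insert (sInf Z) (s.image fun z => sInf (Z ∩ Set.Ioi z))).card
        ≤ (s.image fun z => sInf (Z ∩ Set.Ioi z)).card + 1 := Finset.card_insert_le _ _
      _ ≤ s.card + 1 := Nat.add_le_add_right Finset.card_image_le 1
  · intro a b hd
    have hds : ∀ z ∈ s, z ∉ Set.Ioo a b := fun z hz => hd z (Finset.mem_union_left _ hz)
    obtain ⟨m, q, hmq⟩ := hf a b hds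
    by_cases hab : a < b
    swap
    · exact ⟨0, 0, fun x hx => absurd hx (by simp [Set.Ioo_eq_empty hab])⟩
    by_cases hm : m = 0
    · exact ⟨0, max q 0, fun x hx => by show max (f x) 0 = _; rw [hmq x hx, hm]; ring_nf⟩
    set r : ℝ := -q / m with hrdef
    have hmr : m * r + q = 0 := by rw [hrdef]; field_simp; ring
    by_cases hrin : r ∈ Set.Ioo a b
    · exfalso
      have hfr0 : f r = 0 := by rw [hmq r hrin, hmr]
      have hrZ : r ∈ Z := hfr0
      -- key lemma: no zero of f strictly between c' and r, if (c', b) avoids s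
      have keylem : ∀ c' y : ℝ, (∀ z ∈ s, z ∉ Set.Ioo c' b) → c' < y → y < r → f y ≠ 0 := by
        intro c' y hdisj hcy hyr
        obtain ⟨m₂, q₂, h₂⟩ := hf c' b hdisj
        have hrI : r ∈ Set.Ioo c' b := ⟨lt_trans hcy hyr, hrin.2⟩
        set u : ℝ := (r + b) / 2 with hudef
        have hru : r < u := by rw [hudef]; linarith [hrin.2]
        have hu1 : u ∈ Set.Ioo c' b := ⟨lt_trans hrI.1 hru, by rw [hudef]; linarith [hrin.2]⟩
        have hu2 : u ∈ Set.Ioo a b := ⟨lt_trans hrin.1 hru, hu1.2⟩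
        have e1 : m₂ * r + q₂ = m * r + q := by rw [← h₂ r hrI, hmq r hrin]
        have e2 : m₂ * u + q₂ = m * u + q := by rw [← h₂ u hu1, hmq u hu2]
        have hm2 : m₂ = m := by
          have h3 : (m₂ - m) * (r - u) = 0 := by linarith [e1, e2, mul_comm m₂ r]
          rcases mul_eq_zero.mp h3 with h4 | h4
          · linarith
          · exact absurd h4 (sub_ne_zero.mpr (ne_of_lt hru))
        have hq2 : q₂ = q := by rw [hm2] at e1; linarith
        rw [h₂ y ⟨hcy, lt_trans hyr hrin.2⟩, hm2, hq2]
        intro h0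
        apply hm
        have h5 : m * (y - r) = 0 := by linarith [hmr]
        rcases mul_eq_zero.mp h5 with h6 | h6
        · exact h6
        · exact absurd h6 (sub_ne_zero.mpr (ne_of_lt hyr))
      by_cases hsr : ∃ z ∈ s, z < r
      · -- r = sInf (Z ∩ Ioi z0) where z0 is the largest element of s below r
        have hne : (s.filter (fun t => t < r)).Nonempty := by
          obtain ⟨z, hz, hzr⟩ := hsr; exact ⟨z, by simp only [Finset.mem_filter]; exact ⟨hz, hzr⟩⟩
        set z0 := (s.filter (fun t => t < r)).max' hne with hz0def
        have hz0mem := (s.filter (fun t => t < r)).max'_mem hne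
        have hz0s : z0 ∈ s := (Finset.mem_filter.mp hz0mem).1
        have hz0r : z0 < r := (Finset.mem_filter.mp hz0mem).2
        have hz0max : ∀ z ∈ s, z < r → z ≤ z0 := fun z hz hzr =>
          Finset.le_max' _ z (by simp only [Finset.mem_filter]; exact ⟨hz, hzr⟩)
        have hdisj0 : ∀ z ∈ s, z ∉ Set.Ioo z0 b := by
          intro z hz hzI
          rcases lt_or_ge z r with h | h
          · exact absurd (hz0max z hz h) (not_le.mpr hzI.1)
          · exact hds z hz ⟨lt_of_lt_of_le hrin.1 h, hzI.2⟩
        have hlb : ∀ y ∈ Z ∩ Set.Ioi z0, r ≤ y := by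
          intro y hy
          by_contra hyr
          exact keylem z0 y hdisj0 hy.2 (not_le.mp hyr) hy.1
        have hrmem : r ∈ Z ∩ Set.Ioi z0 := ⟨hrZ, hz0r⟩
        have : sInf (Z ∩ Set.Ioi z0) = r :=
          le_antisymm (csInf_le ⟨r, hlb⟩ hrmem) (le_csInf ⟨r, hrmem⟩ hlb)
        have hrmem' : r ∈ insert (sInf Z) (s.image fun z => sInf (Z ∩ Set.Ioi z)) := by
          apply Finset.mem_insert_of_mem
          rw [← this]
          exact Finset.mem_image_of_mem _ hz0s
        exact hd r (Finset.mem_union_right _ hrmem') hrin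
      · -- r = sInf Z
        push_neg at hsr
        have hlb : ∀ y ∈ Z, r ≤ y := by
          intro y hy
          by_contra hyr
          have hdisj0 : ∀ z ∈ s, z ∉ Set.Ioo (y - 1) b := by
            intro z hz hzI
            exact hds z hz ⟨lt_of_lt_of_le hrin.1 (hsr z hz), hzI.2⟩
          exact keylem (y - 1) y hdisj0 (by linarith) (not_le.mp hyr) hy
        have : sInf Z = r := le_antisymm (csInf_le ⟨r, hlb⟩ hrZ) (le_csInf ⟨r, hrZ⟩ hlb)
        exact hd r (Finset.mem_union_right _ (this ▸ Finset.mem_insert_self _ _)) hrin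
    · -- r outside (a,b): sign of f constant on (a,b)
      have hsign : (∀ x ∈ Set.Ioo a b, 0 ≤ f x) ∨ (∀ x ∈ Set.Ioo a b, f x ≤ 0) := by
        rw [Set.mem_Ioo, not_and_or, not_lt, not_lt] at hrin
        rcases hrin with h | h
        · rcases lt_or_gt_of_ne hm with hm' | hm'
          · right; intro x hx; rw [hmq x hx]; nlinarith [hx.1]
          · left; intro x hx; rw [hmq x hx]; nlinarith [hx.1]
        · rcases lt_or_gt_of_ne hm with hm' | hm'
          · left; intro x hx; rw [hmq x hx]; nlinarith [hx.2]
          · right; intro x hx; rw [hmq x hx]; nlinarith [hx.2]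
      rcases hsign with h | h
      · exact ⟨m, q, fun x hx => by show max (f x) 0 = _; rw [max_eq_left (h x hx), hmq x hx]⟩
      · exact ⟨0, 0, fun x hx => by show max (f x) 0 = _; rw [max_eq_right (h x hx)]; ring⟩



lemma tent_formula : ∀ (m k : ℕ) (x : ℝ), k < 2 ^ m →
    (k : ℝ) ≤ 2 ^ m * x → 2 ^ m * x ≤ (k : ℝ) + 1 →
    tent^[m] x = if Even k then 2 ^ m * x - k else (k : ℝ) + 1 - 2 ^ m * x := by
  intro m
  induction m with
  | zero =>
    intro k x hk h1 h2
    interval_cases k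
    simp
  | succ m ih =>
    intro k x hk h1 h2
    have P : (2:ℝ) ^ (m + 1) = 2 * 2 ^ m := by rw [pow_succ]; ring
    have Pn : 2 ^ (m + 1) = 2 * 2 ^ m := by rw [pow_succ]; ring
    rw [Function.iterate_succ_apply]
    by_cases hk2 : k < 2 ^ m
    · have hkc : (k : ℝ) + 1 ≤ 2 ^ m := by exact_mod_cast Nat.succ_le_of_lt hk2
      have hx2 : x ≤ 1 / 2 := by
        rw [P] at h2
        have h2m : (0:ℝ) < 2 ^ m := by positivity
        nlinarith
      have htx : tent x = 2 * x := min_eq_left (by linarith)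
      have : tent x = 2 * x := htx
      rw [show tent x = 2 * x from htx]
      have hres := ih k (2 * x) hk2 (by rw [P] at h1; linarith) (by rw [P] at h2; linarith)
      rw [hres, P]
      split <;> ring_nf
    · have hk' : 2 ^ m ≤ k := le_of_not_gt hk2
      have hx2 : 1 / 2 ≤ x := by
        have hkc : (2:ℝ) ^ m ≤ k := by exact_mod_cast hk'
        rw [P] at h1
        have h2m : (0:ℝ) < 2 ^ m := by positivity
        nlinarith
      have htx : tent x = 2 - 2 * x := min_eq_right (by linarith)
      rw [show tent x = 2 - 2 * x from htx]
      set k' : ℕ := 2 ^ (m + 1) - 1 - k with hk'def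
      have hkk : k' + k + 1 = 2 * 2 ^ m := by omega
      have hk'lt : k' < 2 ^ m := by omega
      have hkkR : (k' : ℝ) + k + 1 = 2 * 2 ^ m := by exact_mod_cast hkk
      have hb1 : (k' : ℝ) ≤ 2 ^ m * (2 - 2 * x) := by rw [P] at h2; nlinarith
      have hb2 : 2 ^ m * (2 - 2 * x) ≤ (k' : ℝ) + 1 := by rw [P] at h1; nlinarith
      have hres := ih k' (2 - 2 * x) hk'lt hb1 hb2
      rw [hres]
      have hpar : Even k' ↔ ¬ Even k := by
        rw [Nat.even_iff, Nat.even_iff]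
        omega
      by_cases hE : Even k
      · rw [if_neg (by rw [hpar]; exact fun h => h hE), if_pos hE, P]
        nlinarith [hkkR]
      · rw [if_pos (hpar.mpr hE), if_neg hE, P]
        nlinarith [hkkR]

lemma sawtooth_card {mm : ℕ} {s : Finset ℝ} {f : ℝ → ℝ} (hpw : PW s f)
    (hrep : ∀ x ∈ Set.Icc (0:ℝ) 1, f x = tent^[mm] x) : 2 ^ mm - 1 ≤ s.card := by
  classical
  have h2m : (0:ℝ) < 2 ^ mm := by positivity
  have key : ∀ k : ℕ, 1 ≤ k → k < 2 ^ mm → ((k : ℝ) / 2 ^ mm) ∈ s := by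
    intro k hk1 hk2
    set x0 : ℝ := (k : ℝ) / 2 ^ mm with hx0def
    have hx0v : 2 ^ mm * x0 = (k:ℝ) := by rw [hx0def]; field_simp
    by_contra hx0s
    -- build a small radius ε around x0 avoiding s
    set ε0 : ℝ := (2 ^ mm * 2 : ℝ)⁻¹ with hε0def
    have hε0pos : 0 < ε0 := by rw [hε0def]; positivity
    set T : Finset ℝ := insert ε0 (s.image fun z => |z - x0|) with hTdef
    have hTne : T.Nonempty := ⟨ε0, Finset.mem_insert_self _ _⟩
    set ε : ℝ := T.min' hTne with hεdef
    have hεpos : 0 < ε := by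
      have hmem : T.min' hTne ∈ insert ε0 (Finset.image (fun z => |z - x0|) s) := T.min'_mem hTne
      rcases Finset.mem_insert.mp hmem with h | h
      · exact lt_of_lt_of_eq hε0pos h.symm
      · obtain ⟨z, hz, hzeq⟩ := Finset.mem_image.mp h
        have hzx : z ≠ x0 := fun h' => hx0s (h' ▸ hz)
        exact lt_of_lt_of_eq (abs_pos.mpr (sub_ne_zero.mpr hzx)) hzeq
    have hεε0 : ε ≤ ε0 := T.min'_le _ (Finset.mem_insert_self _ _)
    have hεs : ∀ z ∈ s, ε ≤ |z - x0| := fun z hz =>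
      T.min'_le _ (Finset.mem_insert_of_mem (Finset.mem_image_of_mem _ hz))
    have hdisj : ∀ z ∈ s, z ∉ Set.Ioo (x0 - ε) (x0 + ε) := by
      intro z hz hzI
      have h1 := hzI.1; have h2 := hzI.2
      have habs : |z - x0| < ε := abs_sub_lt_iff.mpr ⟨by linarith, by linarith⟩
      linarith [hεs z hz]
    obtain ⟨m, q, hmq⟩ := hpw _ _ hdisj
    -- the three sample points
    have hεsmall : 2 ^ mm * ε ≤ 1 / 2 := by
      have : 2 ^ mm * ε0 = 1 / 2 := by rw [hε0def]; field_simp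
      nlinarith
    have hkR1 : (1:ℝ) ≤ (k:ℝ) := by exact_mod_cast hk1
    have hkR2 : (k:ℝ) ≤ 2 ^ mm - 1 := by
      have : (k:ℝ) + 1 ≤ 2 ^ mm := by exact_mod_cast Nat.succ_le_of_lt hk2
      linarith
    -- memberships in Icc 0 1
    have hIcc : ∀ t : ℝ, |t| ≤ ε / 2 → x0 + t ∈ Set.Icc (0:ℝ) 1 := by
      intro t ht
      have habs1 : -(ε/2) ≤ t := by linarith [neg_abs_le t]
      have habs2 : t ≤ ε/2 := by linarith [le_abs_self t]
      constructor
      · have : 2 ^ mm * (x0 + t) = k + 2 ^ mm * t := by rw [mul_add, hx0v]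
        nlinarith
      · nlinarith
    have hIoo : ∀ t : ℝ, |t| ≤ ε / 2 → x0 + t ∈ Set.Ioo (x0 - ε) (x0 + ε) := by
      intro t ht
      have habs1 : -(ε/2) ≤ t := by linarith [neg_abs_le t]
      have habs2 : t ≤ ε/2 := by linarith [le_abs_self t]
      constructor <;> [linarith; linarith]
    set u : ℝ := 2 ^ mm * (ε / 2) with hudef
    have hupos : 0 < u := by rw [hudef]; positivity
    have husmall : u ≤ 1 / 4 := by rw [hudef]; nlinarith
    -- values of tent^[mm]
    set k1 : ℕ := k - 1 with hk1def
    have hk1k : k1 + 1 = k := by omega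
    have hk1R : (k1 : ℝ) = (k:ℝ) - 1 := by
      have h' : (k1:ℝ) + 1 = (k:ℝ) := by exact_mod_cast hk1k
      linarith
    have hpar : Even k1 ↔ ¬ Even k := by rw [Nat.even_iff, Nat.even_iff]; omega
    have hv0 : tent^[mm] x0 = if Even k then 0 else 1 := by
      rw [tent_formula mm k x0 hk2 (by rw [hx0v]) (by rw [hx0v]; linarith)]
      split <;> rw [hx0v] <;> ring
    have hvm : tent^[mm] (x0 - ε/2) = if Even k then u else 1 - u := by
      have hb : 2 ^ mm * (x0 - ε/2) = (k:ℝ) - u := by rw [mul_sub, hx0v, hudef]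
      rw [tent_formula mm k1 (x0 - ε/2) (by omega) (by rw [hb, hk1R]; linarith)
        (by rw [hb, hk1R]; linarith)]
      by_cases hE : Even k
      · rw [if_neg (fun h => (hpar.mp h) hE), if_pos hE, hb, hk1R]; ring
      · rw [if_pos (hpar.mpr hE), if_neg hE, hb, hk1R]; ring
    have hvp : tent^[mm] (x0 + ε/2) = if Even k then u else 1 - u := by
      have hb : 2 ^ mm * (x0 + ε/2) = (k:ℝ) + u := by rw [mul_add, hx0v, hudef]
      rw [tent_formula mm k (x0 + ε/2) hk2 (by rw [hb]; linarith) (by rw [hb]; linarith)]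
      split <;> rw [hb] <;> ring
    -- affine contradiction
    have hf0 : f x0 = if Even k then 0 else 1 := by
      rw [hrep x0 (by simpa using hIcc 0 (by rw [abs_zero]; linarith)), hv0]
    have hfm : f (x0 - ε/2) = if Even k then u else 1 - u := by
      have hm1 : x0 - ε/2 = x0 + (-(ε/2)) := by ring
      rw [hm1, hrep _ (hIcc _ (by rw [abs_neg, abs_of_pos (by linarith)])), ← hm1, hvm]
    have hfp : f (x0 + ε/2) = if Even k then u else 1 - u := by
      rw [hrep _ (hIcc _ (by rw [abs_of_pos (by linarith)])), hvp]
    have ha0 := hmq x0 (by simpa using hIoo 0 (by rw [abs_zero]; linarith))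
    have ham := hmq (x0 - ε/2) (by
      have := hIoo (-(ε/2)) (by rw [abs_neg, abs_of_pos (by linarith)])
      simpa [sub_eq_add_neg] using this)
    have hap := hmq (x0 + ε/2) (hIoo (ε/2) (by rw [abs_of_pos (by linarith)]))
    have hsum : f (x0 - ε/2) + f (x0 + ε/2) = 2 * f x0 := by
      rw [ha0, ham, hap]; ring
    rw [hf0, hfm, hfp] at hsum
    by_cases hE : Even k
    · simp only [if_pos hE] at hsum; linarith
    · simp only [if_neg hE] at hsum; linarith
  -- now count
  have hsub : (Finset.Ico 1 (2 ^ mm)).image (fun k : ℕ => (k : ℝ) / 2 ^ mm) ⊆ s := by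
    intro x hx
    obtain ⟨k, hk, rfl⟩ := Finset.mem_image.mp hx
    rw [Finset.mem_Ico] at hk
    exact key k hk.1 hk.2
  have hinj : Set.InjOn (fun k : ℕ => (k : ℝ) / 2 ^ mm) (Finset.Ico 1 (2 ^ mm)) := by
    intro i _ j _ hij
    have : (i:ℝ) = j := by
      field_simp at hij
      exact_mod_cast hij
    exact_mod_cast this
  calc 2 ^ mm - 1 = (Finset.Ico 1 (2 ^ mm)).card := by rw [Nat.card_Ico]
    _ = ((Finset.Ico 1 (2 ^ mm)).image (fun k : ℕ => (k : ℝ) / 2 ^ mm)).card :=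
        (Finset.card_image_of_injOn hinj).symm
    _ ≤ s.card := Finset.card_le_card hsub

lemma layer_pw (w : ℕ → ℕ) (cc : Fin (w 0) → ℝ)
    (A : ∀ ℓ, Fin (w (ℓ + 1)) → Fin (w ℓ) → ℝ) (b : ∀ ℓ, Fin (w ℓ) → ℝ) :
    ∀ ℓ, ∃ s : Finset ℝ, s.card + 1 ≤ ∏ i ∈ Finset.range (ℓ + 1), (w i + 1) ∧
      ∀ i : Fin (w ℓ), PW s (fun x => reluHidden w cc A b ℓ x i) := by
  classical
  intro ℓ
  induction ℓ with
  | zero =>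
    have h0 : ∀ i : Fin (w 0), ∃ e : Finset ℝ, e.card ≤ 1 ∧
        PW e (fun x => max (cc i * x + b 0 i) 0) := by
      intro i
      have haff : PW ∅ (fun x => cc i * x + b 0 i) :=
        fun a b' hd => ⟨cc i, b 0 i, fun x _ => rfl⟩
      obtain ⟨e, he1, he2⟩ := pw_relu haff
      exact ⟨e, by simpa using he1, by simpa using he2⟩
    choose e he1 he2 using h0
    refine ⟨Finset.univ.biUnion e, ?_, ?_⟩
    · rw [Finset.prod_range_one]
      have : (Finset.univ.biUnion e).card ≤ ∑ i : Fin (w 0), (e i).card :=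
        Finset.card_biUnion_le
      have h2 : ∑ i : Fin (w 0), (e i).card ≤ ∑ _i : Fin (w 0), 1 :=
        Finset.sum_le_sum (fun i _ => he1 i)
      simp only [Finset.sum_const, Finset.card_univ, Fintype.card_fin, smul_eq_mul, mul_one] at h2
      omega
    · intro i
      exact (he2 i).mono (Finset.subset_biUnion_of_mem e (Finset.mem_univ i))
  | succ ℓ ih =>
    obtain ⟨s, hc, hpw⟩ := ih
    have hstep : ∀ i : Fin (w (ℓ + 1)), ∃ e : Finset ℝ, e.card ≤ s.card + 1 ∧
        PW (s ∪ e) (fun x => max ((∑ j, A ℓ i j * reluHidden w cc A b ℓ x j) + b (ℓ + 1) i) 0) := by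
      intro i
      exact pw_relu (PW.affineCombo (fun j => A ℓ i j) (b (ℓ + 1) i) (fun j => hpw j))
    choose e he1 he2 using hstep
    refine ⟨s ∪ Finset.univ.biUnion e, ?_, ?_⟩
    · have h1 : (s ∪ Finset.univ.biUnion e).card ≤ s.card + (Finset.univ.biUnion e).card :=
        Finset.card_union_le _ _
      have h2 : (Finset.univ.biUnion e).card ≤ ∑ i : Fin (w (ℓ + 1)), (e i).card :=
        Finset.card_biUnion_le
      have h3 : ∑ i : Fin (w (ℓ + 1)), (e i).card ≤ ∑ _i : Fin (w (ℓ + 1)), (s.card + 1) :=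
        Finset.sum_le_sum (fun i _ => he1 i)
      simp only [Finset.sum_const, Finset.card_univ, Fintype.card_fin, smul_eq_mul] at h3
      rw [Finset.prod_range_succ]
      have h4 : (s ∪ Finset.univ.biUnion e).card + 1 ≤ (s.card + 1) * (w (ℓ + 1) + 1) := by
        have : s.card + w (ℓ + 1) * (s.card + 1) + 1 = (s.card + 1) * (w (ℓ + 1) + 1) := by ring
        omega
      calc (s ∪ Finset.univ.biUnion e).card + 1 ≤ (s.card + 1) * (w (ℓ + 1) + 1) := h4
        _ ≤ (∏ i ∈ Finset.range (ℓ + 1), (w i + 1)) * (w (ℓ + 1) + 1) :=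
            Nat.mul_le_mul_right _ hc
    · intro i
      have := (he2 i).mono (Finset.union_subset_union_right
        (Finset.subset_biUnion_of_mem e (Finset.mem_univ i)))
      exact this
  
lemma hidden_const {w : ℕ → ℕ} {cc : Fin (w 0) → ℝ}
    {A : ∀ ℓ, Fin (w (ℓ + 1)) → Fin (w ℓ) → ℝ} {b : ∀ ℓ, Fin (w ℓ) → ℝ} {ℓ0 : ℕ}
    (h0 : w ℓ0 = 0) : ∀ (d : ℕ) (x y : ℝ) (i : Fin (w (ℓ0 + d))),
    reluHidden w cc A b (ℓ0 + d) x i = reluHidden w cc A b (ℓ0 + d) y i := by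
  intro d
  induction d with
  | zero =>
    intro x y i
    have hz : w (ℓ0 + 0) = 0 := h0
    exact absurd i.isLt (by omega)
  | succ d ihd =>
    intro x y i
    show reluHidden w cc A b ((ℓ0 + d) + 1) x i = reluHidden w cc A b ((ℓ0 + d) + 1) y i
    simp only [reluHidden]
    congr 2
    exact Finset.sum_congr rfl (fun j _ => by rw [ihd x y j])


lemma hidden_const' {w : ℕ → ℕ} {cc : Fin (w 0) → ℝ}
    {A : ∀ ℓ, Fin (w (ℓ + 1)) → Fin (w ℓ) → ℝ} {b : ∀ ℓ, Fin (w ℓ) → ℝ} {ℓ0 ℓ : ℕ}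
    (h0 : w ℓ0 = 0) (hle : ℓ0 ≤ ℓ) :
    ∀ (x y : ℝ) (i : Fin (w ℓ)), reluHidden w cc A b ℓ x i = reluHidden w cc A b ℓ y i := by
  obtain ⟨d, rfl⟩ := Nat.exists_eq_add_of_le hle
  exact hidden_const h0 d

lemma tent_mem {x : ℝ} (hx : x ∈ Set.Icc (0:ℝ) 1) : tent x ∈ Set.Icc (0:ℝ) 1 := by
  obtain ⟨h0, h1⟩ := hx
  constructor
  · exact le_min (by linarith) (by linarith)
  · rcases le_total x (1/2) with h | h
    · calc tent x ≤ 2 * x := min_le_left _ _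
        _ ≤ 1 := by linarith
    · calc tent x ≤ 2 - 2 * x := min_le_right _ _
        _ ≤ 1 := by linarith

lemma tent_iter_mem {x : ℝ} (hx : x ∈ Set.Icc (0:ℝ) 1) (ℓ : ℕ) :
    tent^[ℓ] x ∈ Set.Icc (0:ℝ) 1 := by
  induction ℓ with
  | zero => simpa using hx
  | succ ℓ ih => rw [Function.iterate_succ_apply']; exact tent_mem ih

lemma tent_comb {y : ℝ} (h0 : 0 ≤ y) (h1 : y ≤ 1) :
    tent y = 2 * y - 4 * max (y - 1/2) 0 := by
  rcases le_total y (1/2) with h | h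
  · rw [max_eq_right (by linarith)]
    show min (2*y) (2-2*y) = _
    rw [min_eq_left (by linarith)]; ring
  · rw [max_eq_left (by linarith)]
    show min (2*y) (2-2*y) = _
    rw [min_eq_right (by linarith)]; ring

lemma upper_net (n : ℕ) :
    ∃ (w : ℕ → ℕ) (cc : Fin (w 0) → ℝ) (A : ∀ ℓ, Fin (w (ℓ + 1)) → Fin (w ℓ) → ℝ)
      (b : ∀ ℓ, Fin (w ℓ) → ℝ) (v : Fin (w n) → ℝ) (v0 : ℝ),
      (∀ ℓ, w ℓ ≤ 2) ∧ ∀ x ∈ Set.Icc (0:ℝ) 1,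
        (∑ j, v j * reluHidden w cc A b n x j) + v0 = tent^[n + 1] x := by
  refine ⟨fun _ => 2, ![1, 1], fun _ => ![![2, -4], ![2, -4]], fun _ => ![0, -(1/2)],
    ![2, -4], 0, fun _ => le_refl 2, ?_⟩
  intro x hx
  set H := reluHidden (fun _ => 2) ![1, 1] (fun _ => ![![2, -4], ![2, -4]]) (fun _ => ![0, -(1/2)])
    with hHdef
  have inv : ∀ ℓ, H ℓ x 0 = tent^[ℓ] x ∧ H ℓ x 1 = max (tent^[ℓ] x - 1/2) 0 := by
    intro ℓ
    induction ℓ with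
    | zero =>
      constructor
      · show max (1 * x + 0) 0 = x
        rw [max_eq_left (by simpa using hx.1)]
        ring
      · show max (1 * x + -(1/2)) 0 = max (x - 1/2) 0
        norm_num [sub_eq_add_neg]
    | succ ℓ ih =>
      obtain ⟨ih0, ih1⟩ := ih
      have hmem := tent_iter_mem hx ℓ
      have hpre : ∀ i : Fin 2, (∑ j : Fin 2, (![![2, -4], ![2, -4]] : Fin 2 → Fin 2 → ℝ) i j * H ℓ x j)
          = tent^[ℓ + 1] x := by
        intro i
        rw [Fin.sum_univ_two, ih0, ih1]
        rw [Function.iterate_succ_apply', tent_comb hmem.1 hmem.2]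
        fin_cases i <;> simp <;> ring
      have hmem1 := tent_iter_mem hx (ℓ + 1)
      constructor
      · show max ((∑ j : Fin 2, (![![2, -4], ![2, -4]] : Fin 2 → Fin 2 → ℝ) 0 j * H ℓ x j) + (![0, -(1/2)] : Fin 2 → ℝ) 0) 0 = tent^[ℓ + 1] x
        rw [hpre 0]
        simp only [Matrix.cons_val_zero, add_zero]
        exact max_eq_left hmem1.1
      · show max ((∑ j : Fin 2, (![![2, -4], ![2, -4]] : Fin 2 → Fin 2 → ℝ) 1 j * H ℓ x j) + (![0, -(1/2)] : Fin 2 → ℝ) 1) 0 = max (tent^[ℓ + 1] x - 1/2) 0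
        rw [hpre 1]
        norm_num [sub_eq_add_neg]
  obtain ⟨i0, i1⟩ := inv n
  show (∑ j : Fin 2, (![2, -4] : Fin 2 → ℝ) j * H n x j) + 0 = tent^[n + 1] x
  rw [Fin.sum_univ_two, i0, i1, Function.iterate_succ_apply',
    tent_comb (tent_iter_mem hx n).1 (tent_iter_mem hx n).2]
  simp
  ring

lemma final_arith {Lh L K : ℕ} (hLh : Lh + 1 ≤ L) (hK : 2 ≤ K)
    (w : ℕ → ℕ) (hpos : ∀ ℓ ≤ Lh, 1 ≤ w ℓ)
    (hprod : 2 ^ (K * L) ≤ ∏ i ∈ Finset.range (Lh + 1), (w i + 1)) :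
    (1/2 : ℝ) * (Lh + 1 : ℝ) * (K : ℝ) ^ ((L : ℝ) / (Lh + 1 : ℝ)) ≤
      ∑ ℓ ∈ Finset.range (Lh + 1), (w ℓ : ℝ) := by
  set n : ℕ := Lh + 1 with hndef
  set N : ℝ := (Lh : ℝ) + 1 with hNdef
  have hNn : ((n : ℕ) : ℝ) = N := by rw [hndef, hNdef]; push_cast; ring
  have hNpos : 0 < N := by rw [hNdef]; positivity
  -- nat product bound
  have step1 : (∏ i ∈ Finset.range n, (w i + 1)) ≤ ∏ i ∈ Finset.range n, (2 * w i) := by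
    apply Finset.prod_le_prod'
    intro i hi
    have : 1 ≤ w i := hpos i (by rw [Finset.mem_range] at hi; omega)
    omega
  have step2 : (∏ i ∈ Finset.range n, (2 * w i)) = 2 ^ n * ∏ i ∈ Finset.range n, w i := by
    rw [Finset.prod_mul_distrib, Finset.prod_const, Finset.card_range]
  have natP : 2 ^ (K * L) ≤ 2 ^ n * ∏ i ∈ Finset.range n, w i := by
    rw [← step2]; exact le_trans hprod step1
  -- real versions
  set Pr : ℝ := ∏ i ∈ Finset.range n, (w i : ℝ) with hPrdef
  set S : ℝ := ∑ ℓ ∈ Finset.range n, (w ℓ : ℝ) with hSdef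
  have hPrpos : 0 < Pr := by
    rw [hPrdef]
    apply Finset.prod_pos
    intro i hi
    have : 1 ≤ w i := hpos i (by rw [Finset.mem_range] at hi; omega)
    exact_mod_cast Nat.lt_of_lt_of_le Nat.zero_lt_one this
  have realP : (2:ℝ) ^ (K * L) ≤ 2 ^ n * Pr := by
    rw [hPrdef, ← Nat.cast_prod]
    exact_mod_cast natP
  -- AM-GM
  have amgm : Pr ^ (1 / N) ≤ S / N := by
    have hgm := Real.geom_mean_le_arith_mean_weighted (Finset.range n) (fun _ => 1 / N)
      (fun i => (w i : ℝ)) (fun i _ => by positivity)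
      (by rw [Finset.sum_const, Finset.card_range, nsmul_eq_mul, hNn]; field_simp)
      (fun i _ => by positivity)
    rw [Real.finset_prod_rpow _ _ (fun i _ => by positivity) _] at hgm
    calc Pr ^ (1 / N) ≤ ∑ i ∈ Finset.range n, (1 / N) * (w i : ℝ) := hgm
      _ = S / N := by rw [← Finset.mul_sum]; ring
  -- lower bound on Pr ^ (1/N)
  have hPr2 : (2:ℝ) ^ ((K * L : ℕ) : ℝ) / 2 ^ ((n : ℕ) : ℝ) ≤ Pr := by
    rw [Real.rpow_natCast, Real.rpow_natCast, div_le_iff₀ (by positivity)]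
    calc (2:ℝ) ^ (K * L) ≤ 2 ^ n * Pr := realP
      _ = Pr * 2 ^ n := by ring
  have hexp : (2:ℝ) ^ (((K * L : ℕ) : ℝ) - N) ≤ Pr := by
    rw [Real.rpow_sub two_pos]
    rw [hNn] at hPr2
    exact hPr2
  have hmono : ((2:ℝ) ^ (((K * L : ℕ) : ℝ) - N)) ^ (1 / N) ≤ Pr ^ (1 / N) :=
    Real.rpow_le_rpow (by positivity) hexp (by positivity)
  have hsimp : ((2:ℝ) ^ (((K * L : ℕ) : ℝ) - N)) ^ (1 / N)
      = (2:ℝ) ^ (((K * L : ℕ) : ℝ) / N) / 2 := by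
    have he : (((K * L : ℕ) : ℝ) - N) * (1 / N) = ((K * L : ℕ) : ℝ) / N - 1 := by
      field_simp
    rw [← Real.rpow_mul (by norm_num), he, Real.rpow_sub two_pos, Real.rpow_one]
  -- K ^ (L/N) ≤ 2 ^ (KL/N)
  have hKle : (K : ℝ) ≤ (2:ℝ) ^ (K : ℕ) := by
    exact_mod_cast le_of_lt (Nat.lt_two_pow_self (n := K))
  have hK2 : (K : ℝ) ^ ((L : ℝ) / N) ≤ (2:ℝ) ^ (((K * L : ℕ) : ℝ) / N) := by
    calc (K : ℝ) ^ ((L : ℝ) / N) ≤ ((2:ℝ) ^ (K : ℕ)) ^ ((L : ℝ) / N) :=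
          Real.rpow_le_rpow (by positivity) hKle (by positivity)
      _ = (2:ℝ) ^ ((K : ℝ) * ((L : ℝ) / N)) := by
          rw [← Real.rpow_natCast 2 K, ← Real.rpow_mul (by norm_num)]
      _ = (2:ℝ) ^ (((K * L : ℕ) : ℝ) / N) := by
          congr 1
          push_cast
          ring
  -- combine
  have chain : (K : ℝ) ^ ((L : ℝ) / N) / 2 ≤ S / N := by
    calc (K : ℝ) ^ ((L : ℝ) / N) / 2 ≤ (2:ℝ) ^ (((K * L : ℕ) : ℝ) / N) / 2 := by linarith
      _ = ((2:ℝ) ^ (((K * L : ℕ) : ℝ) - N)) ^ (1 / N) := hsimp.symm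
      _ ≤ Pr ^ (1 / N) := hmono
      _ ≤ S / N := amgm
  have : N * ((K : ℝ) ^ ((L : ℝ) / N) / 2) ≤ N * (S / N) := by
    apply mul_le_mul_of_nonneg_left chain (le_of_lt hNpos)
  have h2 : N * (S / N) = S := by field_simp
  rw [h2] at this
  have h3 : (1/2 : ℝ) * N * (K : ℝ) ^ ((L : ℝ) / N) = N * ((K : ℝ) ^ ((L : ℝ) / N) / 2) := by
    ring
  linarith

/-- Telgarsky-type depth separation: there is an absolute constant `c > 0` such that for
all `L ≥ 1`, `K ≥ 2`, the sawtooth `g_{KL}` (the `K·L`-fold composition of the tent map)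
is representable on `[0,1]` by a ReLU network with `K·L` hidden layers of width `≤ 2`,
while any ReLU network with `L̃ = Lh+1 ≤ L` hidden layers representing `g_{KL}` on
`[0,1]` must have at least `c·L̃·K^{L/L̃}` neurons in total. -/
theorem stmt_19 :
    ∃ c : ℝ, 0 < c ∧ ∀ (L K : ℕ), 1 ≤ L → 2 ≤ K →
      (∃ (w : ℕ → ℕ) (cc : Fin (w 0) → ℝ)
          (A : ∀ ℓ, Fin (w (ℓ + 1)) → Fin (w ℓ) → ℝ) (b : ∀ ℓ, Fin (w ℓ) → ℝ)
          (v : Fin (w (K * L - 1)) → ℝ) (v0 : ℝ),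
        (∀ ℓ, w ℓ ≤ 2) ∧
        ∀ x ∈ Set.Icc (0 : ℝ) 1,
          (∑ j, v j * reluHidden w cc A b (K * L - 1) x j) + v0 = tent^[K * L] x) ∧
      (∀ (Lh : ℕ), Lh + 1 ≤ L →
        ∀ (w : ℕ → ℕ) (cc : Fin (w 0) → ℝ)
          (A : ∀ ℓ, Fin (w (ℓ + 1)) → Fin (w ℓ) → ℝ) (b : ∀ ℓ, Fin (w ℓ) → ℝ)
          (v : Fin (w Lh) → ℝ) (v0 : ℝ),
          (∀ x ∈ Set.Icc (0 : ℝ) 1,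
            (∑ j, v j * reluHidden w cc A b Lh x j) + v0 = tent^[K * L] x) →
          c * (Lh + 1 : ℝ) * (K : ℝ) ^ ((L : ℝ) / (Lh + 1 : ℝ)) ≤
            ∑ ℓ ∈ Finset.range (Lh + 1), (w ℓ : ℝ)) := by
  refine ⟨1/2, by norm_num, ?_⟩
  intro L K hL hK
  have hKL1 : K * L - 1 + 1 = K * L := by
    have : 1 ≤ K * L := Nat.mul_pos (by omega) (by omega)
    omega
  constructor
  · obtain ⟨w, cc, A, b, v, v0, hw, hrep⟩ := upper_net (K * L - 1)
    rw [hKL1] at hrep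
    exact ⟨w, cc, A, b, v, v0, hw, hrep⟩
  · intro Lh hLh w cc A b v v0 hrep
    set m : ℕ := K * L with hmdef
    have hm1 : 1 ≤ m := by
      have : 1 ≤ K * L := Nat.mul_pos (by omega) (by omega)
      omega
    have h2m : 1 ≤ 2 ^ m := Nat.one_le_two_pow
    -- values of the sawtooth at 0 and (2^m)⁻¹
    have t0 : tent^[m] (0:ℝ) = 0 := by
      have h := tent_formula m 0 0 (by omega) (by norm_num) (by norm_num)
      simpa using h
    have hx1mem : ((2:ℝ) ^ m)⁻¹ ∈ Set.Icc (0:ℝ) 1 := by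
      constructor
      · positivity
      · rw [inv_le_one_iff₀]
        right
        exact one_le_pow₀ (by norm_num)
    have t1 : tent^[m] ((2:ℝ) ^ m)⁻¹ = 1 := by
      have h := tent_formula m 0 ((2:ℝ) ^ m)⁻¹ (by omega)
        (by rw [Nat.cast_zero, mul_inv_cancel₀ (show ((2:ℝ) ^ m) ≠ 0 by positivity)]; norm_num)
        (by rw [mul_inv_cancel₀ (show ((2:ℝ) ^ m) ≠ 0 by positivity)]; norm_num)
      rw [h, if_pos (Even.zero)]
      rw [mul_inv_cancel₀ (by positivity)]
      norm_num
    -- all widths are positive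
    have hpos : ∀ ℓ ≤ Lh, 1 ≤ w ℓ := by
      intro ℓ0 hℓ0
      by_contra hcon
      have h0 : w ℓ0 = 0 := by omega
      have hconst := hidden_const' (cc := cc) (A := A) (b := b) h0 hℓ0
      have e0 := hrep 0 ⟨le_refl 0, zero_le_one⟩
      have e1 := hrep ((2:ℝ) ^ m)⁻¹ hx1mem
      have hsum : (∑ j, v j * reluHidden w cc A b Lh (0:ℝ) j)
          = ∑ j, v j * reluHidden w cc A b Lh ((2:ℝ) ^ m)⁻¹ j :=
        Finset.sum_congr rfl (fun j _ => by rw [hconst 0 ((2:ℝ) ^ m)⁻¹ j])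
      rw [t0] at e0
      rw [t1] at e1
      rw [hsum] at e0
      linarith
    -- piecewise-affine structure of the network output
    obtain ⟨s, hc, hpw⟩ := layer_pw w cc A b Lh
    have outPW : PW s (fun x => (∑ j, v j * reluHidden w cc A b Lh x j) + v0) :=
      PW.affineCombo v v0 hpw
    have hcard : 2 ^ m - 1 ≤ s.card := sawtooth_card outPW (fun x hx => hrep x hx)
    have hprod : 2 ^ (K * L) ≤ ∏ i ∈ Finset.range (Lh + 1), (w i + 1) := by
      have h1 : 2 ^ m ≤ s.card + 1 := by omega
      calc 2 ^ (K * L) = 2 ^ m := by rw [hmdef]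
        _ ≤ s.card + 1 := h1
        _ ≤ _ := hc
    exact final_arith hLh hK w hpos hprod
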